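/- For every real α > 1/2, every ρ > 0 and every a ∈ ℝ⁴: ∫_{ℝ⁴} (16 ρ² / (‖x−a‖² + ρ²)²)^α · (4 ‖x−a‖² / (‖x−a‖² + ρ²)²) dx = 4^{2α+1} π² · 2 Γ(2α−1)/Γ(2α+2) · ρ^{2−2α}; equivalently this equals A(α)·B(α)·ρ^{2−2α} with A(α) = 4^{2α+1} π² (2α−1) Γ(2α−1)/Γ(2(α+1)) and B(α) = 2/(2α−1). (This computes the ρ–ρ component of the universal metric g^{0,α} on the c₂ = 1 SU(2) instanton moduli space built from the ADHM universal matrix.) -/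

import Mathlib

open MeasureTheory Real Set

lemma shift_Ioi (g : ℝ → ℝ) (c : ℝ) :
    ∫ u in Ioi (0:ℝ), g (u + c) = ∫ v in Ioi c, g v := by
  have h := (measurePreserving_add_right (volume : Measure ℝ) c).setIntegral_preimage_emb
    (measurableEmbedding_addRight c) g (Ioi c)
  rw [← h]; congr 1; ext x; simp [lt_sub_iff_add_lt]

lemma beta_aux {c s : ℝ} (hc : 0 < c) (hs : 3 < s) :
    ∫ u in Ioi (0:ℝ), u ^ 2 * (u + c) ^ (-s) =
      2 * c ^ (3 - s) / ((s - 1) * (s - 2) * (s - 3)) := by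
  have h := shift_Ioi (fun v => (v - c) ^ 2 * v ^ (-s)) c
  simp only [add_sub_cancel_right] at h
  rw [h]
  have key : ∀ v ∈ Ioi c, (v - c) ^ 2 * v ^ (-s)
      = v ^ (2 - s) - (2 * c) * v ^ (1 - s) + c ^ 2 * v ^ (-s) := by
    intro v hv
    have hv0 : 0 < v := hc.trans hv
    have h2 : v ^ (2 - s) = v ^ (2 : ℕ) * v ^ (-s) := by
      rw [← Real.rpow_natCast v 2, ← Real.rpow_add hv0]
      norm_num [sub_eq_add_neg]
    have h1 : v ^ (1 - s) = v * v ^ (-s) := by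
      rw [sub_eq_add_neg, Real.rpow_add hv0, Real.rpow_one]
    rw [h2, h1]; ring
  rw [setIntegral_congr_fun measurableSet_Ioi key]
  have h2s : (2 : ℝ) - s < -1 := by linarith
  have h1s : (1 : ℝ) - s < -1 := by linarith
  have h0s : -s < -1 := by linarith
  have I2 := integrableOn_Ioi_rpow_of_lt h2s hc
  have I1 := (integrableOn_Ioi_rpow_of_lt h1s hc).const_mul (2 * c)
  have I0 := (integrableOn_Ioi_rpow_of_lt h0s hc).const_mul (c ^ 2)
  have hadd : ∫ x in Ioi c, (x ^ (2 - s) - 2 * c * x ^ (1 - s) + c ^ 2 * x ^ (-s)) =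
      (∫ x in Ioi c, (x ^ (2 - s) - 2 * c * x ^ (1 - s))) + ∫ x in Ioi c, c ^ 2 * x ^ (-s) :=
    integral_add (I2.sub I1) I0
  rw [hadd, integral_sub I2 I1, integral_const_mul, integral_const_mul,
    integral_Ioi_rpow_of_lt h2s hc, integral_Ioi_rpow_of_lt h1s hc,
    integral_Ioi_rpow_of_lt h0s hc]
  have E1 : (2:ℝ) - s + 1 = 3 - s := by ring
  have E2 : (1:ℝ) - s + 1 = 2 - s := by ring
  have E3 : -s + 1 = 1 - s := by ring
  rw [E1, E2, E3]
  have g2 : c ^ ((2:ℝ) - s) = c * c ^ (1 - s) := by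
    rw [show (2:ℝ) - s = 1 + (1 - s) by ring, Real.rpow_add hc, Real.rpow_one]
  have g3 : c ^ ((3:ℝ) - s) = c ^ (2:ℕ) * c ^ (1 - s) := by
    rw [← Real.rpow_natCast c 2, ← Real.rpow_add hc]
    congr 1; push_cast; ring
  rw [g2, g3]
  have hne1 : s - 1 ≠ 0 := by intro h'; linarith
  have hne2 : s - 2 ≠ 0 := by intro h'; linarith
  have hne3 : s - 3 ≠ 0 := by intro h'; linarith
  have k1 : (3:ℝ) - s ≠ 0 := by intro h'; linarith
  have k2 : (2:ℝ) - s ≠ 0 := by intro h'; linarith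
  have k3 : (1:ℝ) - s ≠ 0 := by intro h'; linarith
  field_simp
  ring

/-- The `ρ`–`ρ` component of the universal metric `g^{0,α}` on the `c₂ = 1`
`SU(2)` instanton moduli space built from the ADHM universal matrix:
`∫_{ℝ⁴} Φ(U)^α · Tr(∂_ρP ∂_ρP) dx = 4^{2α+1} π² · 2Γ(2α−1)/Γ(2α+2) · ρ^{2−2α}`,
i.e. `A(α)·B(α)·ρ^{2−2α}` with `B(α) = 2/(2α−1)`. -/
theorem adhm_metric_rhorho_component (α ρ : ℝ) (hα : 1 / 2 < α) (hρ : 0 < ρ)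
    (a : Fin 4 → ℝ) :
    ∫ x : Fin 4 → ℝ,
        (16 * ρ ^ 2 / ((∑ μ : Fin 4, (x μ - a μ) ^ 2) + ρ ^ 2) ^ 2) ^ α *
          (4 * (∑ μ : Fin 4, (x μ - a μ) ^ 2) /
            ((∑ μ : Fin 4, (x μ - a μ) ^ 2) + ρ ^ 2) ^ 2) =
      4 ^ (2 * α + 1) * π ^ 2 * 2 *
        Real.Gamma (2 * α - 1) / Real.Gamma (2 * α + 2) * ρ ^ (2 - 2 * α) := by
  have hc : (0:ℝ) < ρ ^ 2 := by positivity
  set F : ℝ → ℝ := fun t => (16 * ρ ^ 2 / (t + ρ ^ 2) ^ 2) ^ α * (4 * t / (t + ρ ^ 2) ^ 2)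
    with hF
  have step1 : (∫ x : Fin 4 → ℝ, F (∑ μ : Fin 4, (x μ - a μ) ^ 2))
      = ∫ x : Fin 4 → ℝ, F (∑ μ : Fin 4, (x μ) ^ 2) := by
    have h := integral_sub_right_eq_self (μ := (volume : Measure (Fin 4 → ℝ)))
      (fun x : Fin 4 → ℝ => F (∑ μ : Fin 4, (x μ) ^ 2)) a
    simp only [Pi.sub_apply] at h
    exact h
  have step2 : (∫ x : Fin 4 → ℝ, F (∑ μ : Fin 4, (x μ) ^ 2))
      = ∫ x : EuclideanSpace ℝ (Fin 4), F (‖x‖ ^ 2) := by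
    rw [← ((EuclideanSpace.volume_preserving_symm_measurableEquiv_toLp (Fin 4)).integral_comp
      (MeasurableEquiv.toLp 2 (Fin 4 → ℝ)).symm.measurableEmbedding
      (fun y : Fin 4 → ℝ => F (∑ μ : Fin 4, (y μ) ^ 2)))]
    refine integral_congr_ae (Filter.Eventually.of_forall fun x => ?_)
    change F (∑ μ : Fin 4, (x μ) ^ 2) = F (‖x‖ ^ 2)
    have hx : ∑ μ : Fin 4, (x μ) ^ 2 = ‖x‖ ^ 2 := by
      rw [EuclideanSpace.norm_eq, Real.sq_sqrt (by positivity)]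
      simp [Real.norm_eq_abs, sq_abs]
    rw [hx]
  have step3 : (∫ x : EuclideanSpace ℝ (Fin 4), F (‖x‖ ^ 2))
      = 4 * (π ^ 2 / 2) * ∫ y in Ioi (0:ℝ), y ^ 3 * F (y ^ 2) := by
    have h := integral_fun_norm_addHaar (volume : Measure (EuclideanSpace ℝ (Fin 4)))
      (fun r : ℝ => F (r ^ 2))
    simp only [finrank_euclideanSpace_fin] at h
    have hb : (volume (Metric.ball (0 : EuclideanSpace ℝ (Fin 4)) 1)).toReal = π ^ 2 / 2 := by
      rw [EuclideanSpace.volume_ball]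
      have hΓ3 : Real.Gamma ((Fintype.card (Fin 4) : ℝ) / 2 + 1) = 2 := by
        norm_num
      rw [hΓ3]
      simp only [Fintype.card_fin]
      rw [ENNReal.ofReal_one, one_pow, one_mul, ENNReal.toReal_ofReal (by positivity)]
      rw [show Real.sqrt π ^ 4 = (Real.sqrt π ^ 2) ^ 2 by ring, Real.sq_sqrt pi_pos.le]
    rw [h, measureReal_def, hb]
    simp only [nsmul_eq_mul, smul_eq_mul]
    norm_num
    ring
  have step4 : (∫ y in Ioi (0:ℝ), y ^ 3 * F (y ^ 2))
      = ∫ u in Ioi (0:ℝ), (1/2 : ℝ) * (u * F u) := by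
    rw [← integral_comp_rpow_Ioi_of_pos (g := fun u : ℝ => (1/2 : ℝ) * (u * F u))
      (p := 2) two_pos]
    refine setIntegral_congr_fun measurableSet_Ioi fun y hy => ?_
    have hy0 : (0:ℝ) < y := hy
    have h2 : y ^ (2:ℝ) = y ^ (2:ℕ) := by
      rw [← Real.rpow_natCast y 2]; norm_num
    have h1 : y ^ ((2:ℝ) - 1) = y := by norm_num
    rw [h1, h2]
    simp only [smul_eq_mul]
    ring
  have step5 : ∀ u ∈ Ioi (0:ℝ), (1/2 : ℝ) * (u * F u)
      = (2 * (16 * ρ ^ 2) ^ α) * (u ^ 2 * (u + ρ ^ 2) ^ (-(2 * α + 2))) := by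
    intro u hu
    have hpos : (0:ℝ) < u + ρ ^ 2 := by
      have : (0:ℝ) < u := hu
      positivity
    have hA : (16 * ρ ^ 2 / (u + ρ ^ 2) ^ 2 : ℝ) ^ α
        = (16 * ρ ^ 2) ^ α * (u + ρ ^ 2) ^ (-(2 * α)) := by
      rw [Real.div_rpow (by positivity) (by positivity)]
      rw [← Real.rpow_natCast (u + ρ ^ 2) 2, ← Real.rpow_mul hpos.le]
      rw [div_eq_mul_inv, ← Real.rpow_neg hpos.le]
      norm_num
    have h2' : ((u + ρ ^ 2) : ℝ) ^ (-(2:ℝ)) = ((u + ρ ^ 2) ^ (2:ℕ))⁻¹ := by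
      rw [Real.rpow_neg hpos.le, ← Real.rpow_natCast (u + ρ ^ 2) 2]
      norm_num
    have hC : ((u + ρ ^ 2) : ℝ) ^ (-(2 * α)) * (u + ρ ^ 2) ^ (-(2:ℝ))
        = (u + ρ ^ 2) ^ (-(2 * α + 2)) := by
      rw [← Real.rpow_add hpos]; congr 1; ring
    rw [hF]
    simp only []
    rw [hA, div_eq_mul_inv (4 * u), ← h2', ← hC]
    ring
  have step6 : (∫ u in Ioi (0:ℝ), (1/2 : ℝ) * (u * F u))
      = 2 * (16 * ρ ^ 2) ^ α *
        (2 * (ρ ^ 2) ^ ((3:ℝ) - (2 * α + 2)) /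
          ((2 * α + 2 - 1) * (2 * α + 2 - 2) * (2 * α + 2 - 3))) := by
    rw [setIntegral_congr_fun measurableSet_Ioi step5, integral_const_mul,
      beta_aux hc (by linarith)]
  have key : (∫ x : Fin 4 → ℝ,
        (16 * ρ ^ 2 / ((∑ μ : Fin 4, (x μ - a μ) ^ 2) + ρ ^ 2) ^ 2) ^ α *
          (4 * (∑ μ : Fin 4, (x μ - a μ) ^ 2) /
            ((∑ μ : Fin 4, (x μ - a μ) ^ 2) + ρ ^ 2) ^ 2))
      = ∫ x : Fin 4 → ℝ, F (∑ μ : Fin 4, (x μ - a μ) ^ 2) := rfl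
  rw [key, step1, step2, step3, step4, step6]
  -- now pure arithmetic
  have hr1 : ((ρ ^ 2 : ℝ)) ^ ((3:ℝ) - (2 * α + 2)) = ρ ^ (2 - 4 * α) := by
    rw [← Real.rpow_natCast ρ 2, ← Real.rpow_mul hρ.le]
    congr 1; push_cast; ring
  have hr2 : ((16:ℝ) * ρ ^ 2) ^ α = 16 ^ α * ρ ^ (2 * α) := by
    rw [Real.mul_rpow (by norm_num) (by positivity), ← Real.rpow_natCast ρ 2,
      ← Real.rpow_mul hρ.le]
    norm_num
  have hr3 : (4:ℝ) ^ (2 * α + 1) = 4 * 16 ^ α := by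
    rw [Real.rpow_add (by norm_num), Real.rpow_one, Real.rpow_mul (by norm_num : (0:ℝ) ≤ 4)]
    rw [show (4:ℝ) ^ (2:ℝ) = 16 by
      rw [show (2:ℝ) = ((2:ℕ):ℝ) by norm_num, Real.rpow_natCast]
      norm_num]
    ring
  have hr4 : ρ ^ (2 * α) * ρ ^ (2 - 4 * α) = ρ ^ (2 - 2 * α) := by
    rw [← Real.rpow_add hρ]; congr 1; ring
  have hΓ1 : Real.Gamma (2 * α + 2) = (2 * α + 1) * Real.Gamma (2 * α + 1) := by
    rw [show (2 * α + 2 : ℝ) = (2 * α + 1) + 1 by ring]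
    exact Real.Gamma_add_one (by linarith)
  have hΓ2 : Real.Gamma (2 * α + 1) = (2 * α) * Real.Gamma (2 * α) :=
    Real.Gamma_add_one (by linarith)
  have hΓ3 : Real.Gamma (2 * α) = (2 * α - 1) * Real.Gamma (2 * α - 1) := by
    have h := Real.Gamma_add_one (s := 2 * α - 1) (by linarith)
    rw [sub_add_cancel] at h
    exact h
  have hΓpos : 0 < Real.Gamma (2 * α - 1) := Real.Gamma_pos_of_pos (by linarith)
  rw [hr1, hr2, hr3, hΓ1, hΓ2, hΓ3,
    show (2 * α + 2 - 1 : ℝ) = 2 * α + 1 by ring, show (2 * α + 2 - 2 : ℝ) = 2 * α by ring,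
    show (2 * α + 2 - 3 : ℝ) = 2 * α - 1 by ring, ← hr4]
  have e1 : (2 * α + 1 : ℝ) ≠ 0 := by linarith
  have e2 : (2 * α : ℝ) ≠ 0 := by linarith
  have e3 : (2 * α - 1 : ℝ) ≠ 0 := by linarith
  have e4 : Real.Gamma (2 * α - 1) ≠ 0 := hΓpos.ne'
  field_simp
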